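/- (No arbitrage sub-domain for the Vanishing Upward SVI.) Let γ = 0, ρ = 1, 0 < b < 1, μ ≤ 0 and σ ≥ (34√2 − 5√5)·b / (54·(1 − b²)). Then the Vanishing Upward SVI with these parameters is arbitrage-free. -/

import Mathlib

/-- SVI normalized total variance shape: `N(l) = γ + ρ·l + √(l²+1)`. -/
noncomputable def Nf (γ ρ l : ℝ) : ℝ := γ + ρ * l + Real.sqrt (l ^ 2 + 1)

/-- `N'(l) = ρ + l/√(l²+1)`. -/
noncomputable def Nf' (ρ l : ℝ) : ℝ := ρ + l / Real.sqrt (l ^ 2 + 1)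

/-- `N''(l) = (l²+1)^(−3/2)`. -/
noncomputable def Nf'' (l : ℝ) : ℝ := (l ^ 2 + 1) ^ (-(3 : ℝ) / 2)

/-- `h(l) = 1 − N'(l)·(l+μ)/(2N(l))`. -/
noncomputable def hf (γ ρ μ l : ℝ) : ℝ := 1 - Nf' ρ l * (l + μ) / (2 * Nf γ ρ l)

/-- `g(l) = N'(l)/4`. -/
noncomputable def gf (ρ l : ℝ) : ℝ := Nf' ρ l / 4

/-- `g₂(l) = N''(l) − N'(l)²/(2N(l))`. -/
noncomputable def g2 (γ ρ l : ℝ) : ℝ := Nf'' l - (Nf' ρ l) ^ 2 / (2 * Nf γ ρ l)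

/-- `G₁(l) = (h(l) − b·g(l))·(h(l) + b·g(l))`. -/
noncomputable def G1 (γ b ρ μ l : ℝ) : ℝ :=
  (hf γ ρ μ l - b * gf ρ l) * (hf γ ρ μ l + b * gf ρ l)

/-- Fukasawa (weak no-arbitrage) conditions: both factors of `G₁` are positive on `ℝ`. -/
def FukasawaCond (γ b ρ μ : ℝ) : Prop :=
  ∀ l : ℝ, 0 < hf γ ρ μ l - b * gf ρ l ∧ 0 < hf γ ρ μ l + b * gf ρ l

/-- No Butterfly arbitrage (Martini–Mingone characterization): Fukasawa conditions plus
`G₁ + (b/(2σ))·g₂ ≥ 0` on `ℝ`. -/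
def ArbitrageFree (γ b ρ μ σ : ℝ) : Prop :=
  FukasawaCond γ b ρ μ ∧ ∀ l : ℝ, 0 ≤ G1 γ b ρ μ l + b / (2 * σ) * g2 γ ρ l

private lemma key_ineq (l s : ℝ) (hs0 : 0 < s) (hs2 : s^2 = l^2+1) (hsl : l < s) :
    50*(s^2 + l*s - 2) ≤ 33*(s*(2*s-l)^2) := by
  nlinarith [sq_nonneg (s-l), sq_nonneg (s-2*l), sq_nonneg (2*s-3*l), sq_nonneg (s*l-2),
    sq_nonneg (s-1), mul_pos hs0 hs0, sq_nonneg (l-1), sq_nonneg (l-2),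
    mul_pos (sub_pos.2 hsl) hs0]

set_option maxHeartbeats 1000000 in
/-- explicit no-arbitrage sub-domain for the Vanishing Upward SVI. -/
theorem vanishing_upward_subdomain (b μ σ : ℝ) (hb : 0 < b) (hb1 : b < 1)
    (hμ : μ ≤ 0)
    (hσ : σ ≥ (34 * Real.sqrt 2 - 5 * Real.sqrt 5) * b / (54 * (1 - b ^ 2))) :
    ArbitrageFree 0 b 1 μ σ := by
  -- numeric facts
  have hbb : (0:ℝ) < 1 - b ^ 2 := by nlinarith
  have h2 : (1.41:ℝ) ≤ Real.sqrt 2 := by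
    rw [show (1.41:ℝ) = Real.sqrt (1.41^2) from (Real.sqrt_sq (by norm_num)).symm]
    exact Real.sqrt_le_sqrt (by norm_num)
  have h5 : Real.sqrt 5 ≤ 2.24 := by
    rw [show (2.24:ℝ) = Real.sqrt (2.24^2) from (Real.sqrt_sq (by norm_num)).symm]
    exact Real.sqrt_le_sqrt (by norm_num)
  have hC : (35.64:ℝ) ≤ 34 * Real.sqrt 2 - 5 * Real.sqrt 5 := by linarith
  have hσb : σ * (1 - b ^ 2) ≥ (33/50) * b := by
    have h54 : (0:ℝ) < 54 * (1 - b ^ 2) := by linarith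
    have h1 := (div_le_iff₀ h54).mp hσ
    nlinarith [mul_le_mul_of_nonneg_right hC hb.le]
  have hσ0 : 0 < σ := by nlinarith
  -- pointwise Fukasawa computations
  have fuka : FukasawaCond 0 b 1 μ := by
    intro l
    set s := Real.sqrt (l ^ 2 + 1) with hs
    have hs0 : 0 < s := Real.sqrt_pos.2 (by positivity)
    have hs2 : s ^ 2 = l ^ 2 + 1 := Real.sq_sqrt (by positivity)
    have hsl : l < s := by nlinarith
    have hnl : -l < s := by nlinarith
    have hls0 : l + s ≠ 0 := by intro h; nlinarith
    have hfmg : hf 0 1 μ l - b * gf 1 l = (4*s - 2*(l+μ) - b*(s+l))/(4*s) := by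
      unfold hf gf Nf Nf'
      rw [← hs]
      simp only [zero_add, one_mul]
      field_simp
      ring
    have hfpg : hf 0 1 μ l + b * gf 1 l = (4*s - 2*(l+μ) + b*(s+l))/(4*s) := by
      unfold hf gf Nf Nf'
      rw [← hs]
      simp only [zero_add, one_mul]
      field_simp
      ring
    constructor
    · rw [hfmg]
      apply div_pos _ (by linarith)
      nlinarith [mul_lt_mul_of_pos_right hb1 (show (0:ℝ) < s + l by linarith)]
    · rw [hfpg]
      apply div_pos _ (by linarith)
      nlinarith [mul_pos hb (show (0:ℝ) < s + l by linarith)]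
  refine ⟨fuka, fun l => ?_⟩
  set s := Real.sqrt (l ^ 2 + 1) with hs
  have hs0 : 0 < s := Real.sqrt_pos.2 (by positivity)
  have hs2 : s ^ 2 = l ^ 2 + 1 := Real.sq_sqrt (by positivity)
  have hsl : l < s := by nlinarith
  have hnl : -l < s := by nlinarith
  have hls0 : l + s ≠ 0 := by intro h; nlinarith
  have hfmg : hf 0 1 μ l - b * gf 1 l = (4*s - 2*(l+μ) - b*(s+l))/(4*s) := by
    unfold hf gf Nf Nf'
    rw [← hs]
    simp only [zero_add, one_mul]
    field_simp
    ring
  have hfpg : hf 0 1 μ l + b * gf 1 l = (4*s - 2*(l+μ) + b*(s+l))/(4*s) := by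
    unfold hf gf Nf Nf'
    rw [← hs]
    simp only [zero_add, one_mul]
    field_simp
    ring
  have hG1 : G1 0 b 1 μ l = ((4*s - 2*(l+μ))^2 - b^2*(s+l)^2)/(16*s^2) := by
    unfold G1
    rw [hfmg, hfpg]
    field_simp
    ring
  have hN'' : Nf'' l = 1/s^3 := by
    unfold Nf''
    rw [← hs2, ← Real.rpow_natCast s 2, ← Real.rpow_mul hs0.le]
    norm_num
  have hg2 : g2 0 1 l = (2 - s^2 - l*s)/(2*s^3) := by
    unfold g2 Nf Nf'
    rw [← hs, hN'']
    simp only [zero_add, one_mul]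
    field_simp
    ring
  -- the scaled inequality
  have hP : 0 < 4*s - 2*(l+μ) - b*(s+l) := by
    nlinarith [mul_lt_mul_of_pos_right hb1 (show (0:ℝ) < s + l by linarith)]
  have hQ : 0 < 4*s - 2*(l+μ) + b*(s+l) := by
    nlinarith [mul_pos hb (show (0:ℝ) < s + l by linarith)]
  have key2 : 0 ≤ 2*σ*s*((4*s - 2*(l+μ))^2 - b^2*(s+l)^2) + 8*b*(2 - s^2 - l*s) := by
    rcases le_or_gt (s^2 + l*s) 2 with hX | hX
    · have hA : 0 < (4*s - 2*(l+μ))^2 - b^2*(s+l)^2 := by nlinarith [mul_pos hP hQ]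
      nlinarith [mul_pos (mul_pos (mul_pos (by norm_num : (0:ℝ) < 2) hσ0) hs0) hA,
        mul_nonneg hb.le (by linarith : (0:ℝ) ≤ 2 - s^2 - l*s)]
    · -- use μ ≤ 0 to reduce to μ = 0, then the key polynomial inequality
      have h1 : (4*s - 2*(l+μ))^2 - b^2*(s+l)^2 ≥ (4*s - 2*l)^2 - b^2*(s+l)^2 := by
        nlinarith [mul_nonneg (neg_nonneg.2 hμ) (show (0:ℝ) ≤ 8*s - 4*l - 2*μ by nlinarith)]
      have h2 : s*((4*s - 2*l)^2 - b^2*(s+l)^2) ≥ (1 - b^2)*(4*(s*(2*s-l)^2)) := by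
        nlinarith [mul_nonneg (mul_nonneg (sq_nonneg b) hs0.le)
          (mul_nonneg (sub_pos.2 hsl).le (show (0:ℝ) ≤ 5*s - l by linarith))]
      have h3 : σ*(s*((4*s - 2*l)^2 - b^2*(s+l)^2)) ≥ (33/50)*b*(4*(s*(2*s-l)^2)) := by
        calc σ*(s*((4*s - 2*l)^2 - b^2*(s+l)^2)) ≥ σ*((1 - b^2)*(4*(s*(2*s-l)^2))) :=
              mul_le_mul_of_nonneg_left h2 hσ0.le
          _ = (σ*(1 - b^2))*(4*(s*(2*s-l)^2)) := by ring
          _ ≥ (33/50)*b*(4*(s*(2*s-l)^2)) :=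
              mul_le_mul_of_nonneg_right hσb (by positivity)
      have hkey := key_ineq l s hs0 hs2 hsl
      nlinarith [mul_nonneg (mul_nonneg hσ0.le hs0.le) (sub_nonneg.2 h1),
        mul_le_mul_of_nonneg_left hkey hb.le]
  have hrw : G1 0 b 1 μ l + b / (2*σ) * g2 0 1 l =
      (2*σ*s*((4*s - 2*(l+μ))^2 - b^2*(s+l)^2) + 8*b*(2 - s^2 - l*s)) / (32*σ*s^3) := by
    rw [hG1, hg2]
    field_simp
    ring
  rw [hrw]
  exact div_nonneg key2 (by positivity)
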